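/- arXiv:2605.29650 — 2 statements merged into one kernel-verified Lean document; each statement's English description precedes it below -/
import Mathlib

section
/- Let E be a Riesz space with weak order unit e and let F be a Dedekind complete Riesz space. Endow ba(C_e,F) with the order μ ≤ ν iff ν − μ is an order bounded F-valued charge. Then ba(C_e,F) is a Riesz space, and for all μ,ν ∈ ba(C_e,F) and p ∈ C_e: (μ ∨ ν)(p) = sup{μ(q) + ν(p−q) : q ∈ C_e, q ≤ p}; (μ ∧ ν)(p) = inf{μ(q) + ν(p−q) : q ∈ C_e, q ≤ p}; |μ|(p) = sup{μ(q) − μ(p−q) : q ∈ C_e, q ≤ p}; μ⁺(p) = sup{μ(q) : q ∈ C_e, q ≤ p}; μ⁻(p) = −inf{μ(q) : q ∈ C_e, q ≤ p}. -/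
set_option linter.unusedSectionVars false

open scoped Classical

noncomputable section

namespace RieszPaper

universe u v w

/-! ### Basic Riesz space notions -/

section BasicDefs

variable {E : Type u} [Lattice E] [AddCommGroup E]

/-- The positive part `x ⊔ 0`. -/
def rpos (x : E) : E := x ⊔ 0

/-- The set of components of `e`, i.e. elements `p` with `p ⊓ (e - p) = 0`. -/
def Comp (e : E) : Set E := {p | p ⊓ (e - p) = 0}

/-- Disjoint complement of a set. -/
def disjC (S : Set E) : Set E := {x | ∀ y ∈ S, |x| ⊓ |y| = 0}

/-- The principal band generated by `f` (as double disjoint complement). -/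
def pBand (f : E) : Set E := disjC (disjC {f})

/-- `e` is a weak order unit: `e > 0` and the band generated by `e` is all of `E`. -/
def IsWeakUnit (e : E) : Prop := 0 < e ∧ ∀ x : E, 0 ≤ x → x ⊓ e = 0 → x = 0

/-- The chain `x ⊓ n•|f|`, whose supremum is the band projection of `x ≥ 0`
onto the band generated by `f`. -/
def projChain (f x : E) : Set E := {y | ∃ n : ℕ, y = x ⊓ n • |f|}

/-- Band projection of a positive element onto the band generated by `f`. -/
def projP (f x : E) : E := if h : ∃ s, IsLUB (projChain f x) s then h.choose else 0

/-- Band projection onto the principal band generated by `f`. -/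
def proj (f x : E) : E := projP f (rpos x) - projP f (rpos (-x))

/-- The principal projection property. -/
def HasPPP (α : Type u) [Lattice α] [AddCommGroup α] : Prop :=
  ∀ f x : α, 0 ≤ x → ∃ s, IsLUB (projChain f x) s

/-- A subset is sequentially order closed. -/
def SeqOrderClosed (D : Set E) : Prop :=
  (∀ (x : ℕ → E) (l : E), (∀ n, x n ∈ D) → Monotone x → IsLUB (Set.range x) l → l ∈ D) ∧
  (∀ (x : ℕ → E) (l : E), (∀ n, x n ∈ D) → Antitone x → IsGLB (Set.range x) l → l ∈ D)

end BasicDefs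

/-! ### Charges on components -/

section Charges

variable {E : Type u} [Lattice E] [AddCommGroup E]
variable {F : Type v} [Lattice F] [AddCommGroup F]

/-- `μ` is an `F`-valued signed charge on the components of `e`. -/
def IsChargeOn (e : E) (μ : E → F) : Prop :=
  μ 0 = 0 ∧ ∀ p q : E, p ∈ Comp e → q ∈ Comp e → p ⊓ q = 0 → μ (p + q) = μ p + μ q

/-- `μ` is order bounded on the components of `e`. -/
def OrdBddOn (e : E) (μ : E → F) : Prop :=
  ∃ g : F, 0 ≤ g ∧ ∀ p ∈ Comp e, |μ p| ≤ g

/-- `ba(C_e, F)`: order bounded signed `F`-valued charges on the components of `e`. -/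
def baSet (e : E) : Set (E → F) := {μ | IsChargeOn e μ ∧ OrdBddOn e μ}

/-- The order on charges: `μ ≤ ν` iff `ν - μ` is positive on components. -/
def baLe (e : E) (μ ν : E → F) : Prop := ∀ p ∈ Comp e, μ p ≤ ν p

/-- `η` is the least upper bound of `S ⊆ ba(C_e,F)` within `ba(C_e,F)`. -/
def IsLUBba (e : E) (S : Set (E → F)) (η : E → F) : Prop :=
  η ∈ baSet e ∧ (∀ μ ∈ S, baLe e μ η) ∧
    ∀ ξ ∈ baSet e, (∀ μ ∈ S, baLe e μ ξ) → baLe e η ξ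

/-- `η` is the greatest lower bound of `S ⊆ ba(C_e,F)` within `ba(C_e,F)`. -/
def IsGLBba (e : E) (S : Set (E → F)) (η : E → F) : Prop :=
  η ∈ baSet e ∧ (∀ μ ∈ S, baLe e η μ) ∧
    ∀ ξ ∈ baSet e, (∀ μ ∈ S, baLe e ξ μ) → baLe e ξ η

end Charges

section ChargesCCL

variable {E : Type u} [Lattice E] [AddCommGroup E]
variable {F : Type v} [ConditionallyCompleteLattice F] [AddCommGroup F]

/-- Pointwise formula for the supremum of two charges. -/
def chSupAt (e : E) (μ ν : E → F) (p : E) : F :=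
  sSup {v | ∃ q, q ∈ Comp e ∧ q ≤ p ∧ v = μ q + ν (p - q)}

/-- Pointwise formula for the infimum of two charges. -/
def chInfAt (e : E) (μ ν : E → F) (p : E) : F :=
  sInf {v | ∃ q, q ∈ Comp e ∧ q ≤ p ∧ v = μ q + ν (p - q)}

/-- The modulus of a charge, via the Riesz–Kantorovich-type formula. -/
def chargeAbs (e : E) (μ : E → F) : E → F :=
  fun p => sSup {v | ∃ q, q ∈ Comp e ∧ q ≤ p ∧ v = μ q - μ (p - q)}

/-- The positive part of a charge. -/
def chargePos (e : E) (μ : E → F) : E → F :=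
  fun p => sSup {v | ∃ q, q ∈ Comp e ∧ q ≤ p ∧ v = μ q}

/-- The negative part of a charge. -/
def chargeNeg (e : E) (μ : E → F) : E → F :=
  fun p => sSup {v | ∃ q, q ∈ Comp e ∧ q ≤ p ∧ v = -(μ q)}

end ChargesCCL

/-! ### Operators -/

section Ops

variable {E : Type u} [Lattice E] [AddCommGroup E] [Module ℝ E]

def PosOn (Lp : Set E) (φ : E → E) : Prop := ∀ f ∈ Lp, 0 ≤ f → 0 ≤ φ f

def AddOn (Lp : Set E) (φ : E → E) : Prop :=
  ∀ f g : E, f ∈ Lp → g ∈ Lp → φ (f + g) = φ f + φ g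

def SmulOn (Lp : Set E) (φ : E → E) : Prop :=
  ∀ (r : ℝ) (f : E), f ∈ Lp → φ (r • f) = r • φ f

/-- `φ` is a regular operator on `Lp`: a difference of two positive linear maps. -/
def RegularOn (Lp : Set E) (φ : E → E) : Prop :=
  ∃ ψ₁ ψ₂ : E → E, AddOn Lp ψ₁ ∧ AddOn Lp ψ₂ ∧ SmulOn Lp ψ₁ ∧ SmulOn Lp ψ₂ ∧
    PosOn Lp ψ₁ ∧ PosOn Lp ψ₂ ∧ ∀ f ∈ Lp, φ f = ψ₁ f - ψ₂ f

/-- Uniform convergence of a sequence with regulator `u`. -/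
def UnifConv (u : E) (s : ℕ → E) (f : E) : Prop :=
  ∃ ε : ℕ → ℝ, Antitone ε ∧ Filter.Tendsto ε Filter.atTop (nhds 0) ∧
    ∀ n, |f - s n| ≤ ε n • u

end Ops

/-! ### Conditional expectation operators -/

section CondExp

variable {E : Type u} [ConditionallyCompleteLattice E] [AddCommGroup E] [Module ℝ E]

/-- `(E, e, T)` is a conditional Riesz triple: `e` is a weak order unit and `T` is a
strictly positive conditional expectation operator with `T e = e` whose range is a
Dedekind complete Riesz subspace. -/
structure IsCondTriple (e : E) (T : E →ₗ[ℝ] E) : Prop where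
  weakUnit : IsWeakUnit e
  pos : ∀ x : E, 0 ≤ x → 0 ≤ T x
  strictPos : ∀ x : E, 0 < x → 0 < T x
  ordCont : ∀ (A : Set E) (s : E), A.Nonempty → DirectedOn (· ≤ ·) A →
    IsLUB A s → IsLUB (T '' A) (T s)
  idem : ∀ x : E, T (T x) = T x
  unitFix : T e = e
  rangeSupClosed : ∀ x y : E, x ∈ Set.range T → y ∈ Set.range T → x ⊔ y ∈ Set.range T
  rangeDedekind : ∀ A : Set E, A ⊆ Set.range T → A.Nonempty → BddAbove A →
    sSup A ∈ Set.range T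

end CondExp

/-! ### Universal completion and T-universal completeness -/

section Univ

variable {E : Type u} {G : Type v}
variable [ConditionallyCompleteLattice E] [AddCommGroup E] [Module ℝ E]
variable [ConditionallyCompleteLattice G] [AddCommGroup G] [Module ℝ G]

/-- `j : E → G` realizes `G` as a universal completion of `E`. -/
structure IsUnivCompletion (j : E →ₗ[ℝ] G) : Prop where
  bipos : ∀ x : E, 0 ≤ j x ↔ 0 ≤ x
  latHom : ∀ x y : E, j (x ⊔ y) = j x ⊔ j y
  dense : ∀ z : G, 0 < z → ∃ x : E, 0 < j x ∧ j x ≤ z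
  univComplete : ∀ S : Set G, (∀ x ∈ S, 0 ≤ x) →
    S.Pairwise (fun a b => a ⊓ b = 0) → BddAbove S

/-- `E` is `T`-universally complete (relative to the universal completion `j : E → G`):
every nonempty upwards directed subset `A ⊆ E` such that `j[T[A]]` is bounded above in
`G` has a supremum in `E`. -/
def TUnivComplete (T : E →ₗ[ℝ] E) (j : E →ₗ[ℝ] G) : Prop :=
  ∀ A : Set E, A.Nonempty → DirectedOn (· ≤ ·) A →
    BddAbove (⇑j '' (⇑T '' A)) → BddAbove A

end Univ

/-- `mul` is a commutative `f`-algebra multiplication with unit `u`. -/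
structure IsFAlgebraMul {G : Type v} [Lattice G] [AddCommGroup G] [Module ℝ G]
    (u : G) (mul : G → G → G) : Prop where
  comm : ∀ x y, mul x y = mul y x
  assoc : ∀ x y z, mul (mul x y) z = mul x (mul y z)
  add_left : ∀ x y z, mul (x + y) z = mul x z + mul y z
  smul_left : ∀ (r : ℝ) (x y), mul (r • x) y = r • mul x y
  one_mul : ∀ x, mul u x = x
  mul_nonneg : ∀ x y, 0 ≤ x → 0 ≤ y → 0 ≤ mul x y
  disj : ∀ x y z, x ⊓ y = 0 → 0 ≤ z → mul x z ⊓ y = 0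

/-! ### Bundled T-universally complete conditional Riesz triples -/

/-- A `T`-universally complete conditional Riesz triple `(E, e, T)`, together with a
universal completion `j : E → G` carrying its `f`-algebra multiplication (with unit
`j e`).  Since `E = L¹(T)` is an `R(T)`-module, products of elements of `L^∞(T)` with
elements of `E` again lie in `E` (`mulClosed`). -/
structure CRT (E : Type u) (G : Type v)
    [ConditionallyCompleteLattice E] [AddCommGroup E] [Module ℝ E]
    [CovariantClass E E (· + ·) (· ≤ ·)] [PosSMulMono ℝ E]
    [ConditionallyCompleteLattice G] [AddCommGroup G] [Module ℝ G]
    [CovariantClass G G (· + ·) (· ≤ ·)] [PosSMulMono ℝ G] where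
  e : E
  T : E →ₗ[ℝ] E
  j : E →ₗ[ℝ] G
  mul : G → G → G
  triple : IsCondTriple e T
  compl : IsUnivCompletion j
  falg : IsFAlgebraMul (j e) mul
  tuc : TUnivComplete T j
  mulClosed : ∀ f g : E, (∃ h : E, h ∈ Set.range T ∧ 0 ≤ h ∧ |f| ≤ h) →
    mul (j f) (j g) ∈ Set.range ⇑j

namespace CRT

variable {E : Type u} {G : Type v}
variable [ConditionallyCompleteLattice E] [AddCommGroup E] [Module ℝ E]
  [CovariantClass E E (· + ·) (· ≤ ·)] [PosSMulMono ℝ E]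
variable [ConditionallyCompleteLattice G] [AddCommGroup G] [Module ℝ G]
  [CovariantClass G G (· + ·) (· ≤ ·)] [PosSMulMono ℝ G]
variable (C : CRT E G)

/-- The range `R(T)`. -/
def R : Set E := Set.range ⇑C.T

/-- The product `g · f` of two elements of `E = L¹(T)`, computed in the universal
completion (meaningful whenever the product lies again in `E`, e.g. for
`g ∈ R(T)` or `g ∈ L^∞(T)`). -/
def sm (g f : E) : E := @Function.invFun E G ⟨0⟩ (⇑C.j) (C.mul (C.j g) (C.j f))

/-- `L^∞(T) = {f : |f| ≤ g for some g ∈ R(T)₊}`. -/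
def Linf : Set E := {f | ∃ h ∈ C.R, 0 ≤ h ∧ |f| ≤ h}

/-- The `R(T)`-valued norm `‖f‖_{T,1} = T |f|`. -/
def nrm1 (f : E) : E := C.T |f|

/-- The `R(T)`-valued norm `‖f‖_{T,∞} = inf {α ∈ R(T)₊ : |f| ≤ α}`. -/
def nrmInf (f : E) : E := sInf {a | a ∈ C.R ∧ 0 ≤ a ∧ |f| ≤ a}

/-- Order bounded signed `R(T)`-valued charges on the components of `u`. -/
def baR (u : E) : Set (E → E) :=
  {μ | IsChargeOn u μ ∧ (∀ p ∈ Comp u, μ p ∈ C.R) ∧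
     ∃ g ∈ C.R, 0 ≤ g ∧ ∀ p ∈ Comp u, |μ p| ≤ g}

/-- `ba(T)`: the `T`-absolutely continuous charges in `ba(C_e, R(T))`. -/
def baT : Set (E → E) :=
  {μ | μ ∈ C.baR C.e ∧ ∀ p ∈ Comp C.e, μ p ∈ pBand (C.T p)}

/-- `x = ∑ αᵢ pᵢ` is a standard representation of the `e`-step function `x` with
`R(T)`-coefficients. -/
def IsStdRep (x : E) (n : ℕ) (α p : Fin n → E) : Prop :=
  (∀ i, α i ∈ C.R) ∧ (∀ i, p i ∈ Comp C.e) ∧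
  (∀ i j, i ≠ j → p i ⊓ p j = 0) ∧ (∑ i, p i) = C.e ∧
  x = ∑ i, C.sm (α i) (p i)

/-- `S_e(T)`: the `e`-step functions with `R(T)`-coefficients. -/
def Steps : Set E := {x | ∃ (n : ℕ) (α p : Fin n → E), C.IsStdRep x n α p}

/-- The integral `I_μ` of a step function: `I_μ (∑ αᵢ pᵢ) = ∑ αᵢ μ(pᵢ)`. -/
def Imu (μ : E → E) (x : E) : E :=
  @Classical.epsilon E ⟨0⟩ fun v =>
    ∃ (n : ℕ) (α p : Fin n → E), C.IsStdRep x n α p ∧ v = ∑ i, C.sm (α i) (μ (p i))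

/-- The integral of a positive element of `L^∞(T)` with respect to a positive charge. -/
def intPos (μ : E → E) (f : E) : E :=
  sSup {v | ∃ g ∈ C.Steps, 0 ≤ g ∧ g ≤ f ∧ v = C.Imu μ g}

/-- The integral `∫ f dμ = ∫ f⁺ dμ⁺ − ∫ f⁻ dμ⁺ − ∫ f⁺ dμ⁻ + ∫ f⁻ dμ⁻`. -/
def integral (μ : E → E) (f : E) : E :=
  C.intPos (chargePos C.e μ) (rpos f) - C.intPos (chargePos C.e μ) (rpos (-f))
    - C.intPos (chargeNeg C.e μ) (rpos f) + C.intPos (chargeNeg C.e μ) (rpos (-f))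

/-- Membership in `L^r(Lp, R(T))`: regular linear operators with values in `R(T)`. -/
structure MemLr (Lp : Set E) (φ : E → E) : Prop where
  add : AddOn Lp φ
  smul : SmulOn Lp φ
  mem : ∀ f ∈ Lp, φ f ∈ C.R
  regular : RegularOn Lp φ

/-- Membership in the `T`-strong dual of `(Lp, nrm)`: `R(T)`-linear, regular,
`nrm`-bounded maps into `R(T)`. -/
structure MemDual (Lp : Set E) (nrm : E → E) (φ : E → E) : Prop where
  add : AddOn Lp φ
  smul : SmulOn Lp φ
  modHom : ∀ g f : E, g ∈ C.R → f ∈ Lp → φ (C.sm g f) = C.sm g (φ f)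
  mem : ∀ f ∈ Lp, φ f ∈ C.R
  regular : RegularOn Lp φ
  bdd : ∃ k ∈ C.R, 0 ≤ k ∧ ∀ f ∈ Lp, |φ f| ≤ C.sm k (nrm f)

/-- The `R(T)`-valued norm on the `T`-strong dual. -/
def dualNorm (Lp : Set E) (nrm : E → E) (φ : E → E) : E :=
  sInf {g | g ∈ C.R ∧ 0 ≤ g ∧ ∀ f ∈ Lp, |φ f| ≤ C.sm g (nrm f)}

/-- `|φ| ≤ |ψ|` in `L^r(Lp, R(T))`, via the Riesz–Kantorovich formula. -/
def OpAbsLe (Lp : Set E) (φ ψ : E → E) : Prop :=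
  ∀ f ∈ Lp, 0 ≤ f → ∀ g ∈ Lp, |g| ≤ f →
    |φ g| ≤ sSup {v | ∃ h, h ∈ Lp ∧ |h| ≤ f ∧ v = |ψ h|}

/-- The canonical partial inverse of `h` in `R(T)`: the element `g` of the band
generated by `|h|` with `h g = P_{|h|} e`. -/
def pinv (h : E) : E :=
  @Classical.epsilon E ⟨0⟩ fun g =>
    g ∈ C.R ∧ g ∈ pBand (|h|) ∧ C.sm h g = proj (|h|) C.e

end CRT

/-! ### Bundled Dedekind complete Riesz spaces, for existential statements -/

structure BRiesz : Type (u + 1) where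
  carrier : Type u
  [ccl : ConditionallyCompleteLattice carrier]
  [grp : AddCommGroup carrier]
  [mod : Module ℝ carrier]
  [cov : CovariantClass carrier carrier (· + ·) (· ≤ ·)]
  [psm : PosSMulMono ℝ carrier]

attribute [instance] BRiesz.ccl BRiesz.grp BRiesz.mod BRiesz.cov BRiesz.psm

/-- `(F, ẽ, T̃)` together with `i : E → F` is a `T`-universal completion of `(E, e, T)`. -/
structure IsTUnivCompletion
    {E : Type u} [ConditionallyCompleteLattice E] [AddCommGroup E] [Module ℝ E]
    {F : Type v} [ConditionallyCompleteLattice F] [AddCommGroup F] [Module ℝ F]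
    (e : E) (T : E →ₗ[ℝ] E) (e' : F) (T' : F →ₗ[ℝ] F) (i : E →ₗ[ℝ] F) : Prop where
  triple : IsCondTriple e' T'
  tuniv : ∃ (U : BRiesz.{v}) (j : F →ₗ[ℝ] U.carrier),
    IsUnivCompletion j ∧ TUnivComplete T' j
  bipos : ∀ x : E, 0 ≤ i x ↔ 0 ≤ x
  latHom : ∀ x y : E, i (x ⊔ y) = i x ⊔ i y
  dense : ∀ z : F, 0 < z → ∃ x : E, 0 < i x ∧ i x ≤ z
  unit : i e = e'
  comm : ∀ x : E, T' (i x) = i (T x)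


/-! ### Powers via functional calculus, for the spaces `L^p(T)` -/

/-- A `T`-universally complete conditional Riesz triple together with the power
functions `x ↦ x^p` (`x ≥ 0`, `p > 0`) of the functional calculus on the universal
completion. -/
structure CRTP (E : Type u) (G : Type v)
    [ConditionallyCompleteLattice E] [AddCommGroup E] [Module ℝ E]
    [CovariantClass E E (· + ·) (· ≤ ·)] [PosSMulMono ℝ E]
    [ConditionallyCompleteLattice G] [AddCommGroup G] [Module ℝ G]
    [CovariantClass G G (· + ·) (· ≤ ·)] [PosSMulMono ℝ G]
    extends CRT E G where
  epow : G → ℝ → G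
  epow_one : ∀ x : G, 0 ≤ x → epow x 1 = x
  epow_nonneg : ∀ (x : G) (p : ℝ), 0 ≤ x → 0 < p → 0 ≤ epow x p
  epow_mono : ∀ (x y : G) (p : ℝ), 0 ≤ x → x ≤ y → 0 < p → epow x p ≤ epow y p
  epow_unit : ∀ p : ℝ, 0 < p → epow (toCRT.j toCRT.e) p = toCRT.j toCRT.e
  epow_exp_mul : ∀ (x : G) (p q : ℝ), 0 ≤ x → 0 < p → 0 < q →
    epow (epow x p) q = epow x (p * q)
  epow_mul : ∀ (x y : G) (p : ℝ), 0 ≤ x → 0 ≤ y → 0 < p →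
    epow (toCRT.mul x y) p = toCRT.mul (epow x p) (epow y p)
  epow_succ : ∀ (x : G) (n : ℕ), 0 ≤ x → 0 < n →
    epow x ((n : ℝ) + 1) = toCRT.mul (epow x (n : ℝ)) x
  epow_sup : ∀ (x y : G) (p : ℝ), 0 ≤ x → 0 ≤ y → 0 < p →
    epow (x ⊔ y) p = epow x p ⊔ epow y p
  epow_rangeT : ∀ (x : E) (p : ℝ), 0 ≤ x → 0 < p → x ∈ Set.range ⇑toCRT.T →
    epow (toCRT.j x) p ∈ ⇑toCRT.j '' Set.range ⇑toCRT.T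

namespace CRTP

variable {E : Type u} {G : Type v}
variable [ConditionallyCompleteLattice E] [AddCommGroup E] [Module ℝ E]
  [CovariantClass E E (· + ·) (· ≤ ·)] [PosSMulMono ℝ E]
variable [ConditionallyCompleteLattice G] [AddCommGroup G] [Module ℝ G]
  [CovariantClass G G (· + ·) (· ≤ ·)] [PosSMulMono ℝ G]
variable (C : CRTP E G)

/-- the `p`-th power of `x ∈ E`, computed in the universal completion. -/
def powE (x : E) (p : ℝ) : E :=
  @Function.invFun E G ⟨0⟩ (⇑C.toCRT.j) (C.epow (C.toCRT.j x) p)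

/-- `L^p(T) = {f ∈ L¹(T) : |f|^p ∈ L¹(T)}` for `p ∈ [1, ∞)`. -/
def LpSet (p : ℝ) : Set E := {f | C.epow (C.toCRT.j |f|) p ∈ Set.range ⇑C.toCRT.j}

/-- The `R(T)`-valued norm `‖f‖_{T,p} = (T |f|^p)^{1/p}`. -/
def nrmP (p : ℝ) (f : E) : E := C.powE (C.toCRT.T (C.powE |f| p)) (1 / p)

end CRTP


/-! ### Auxiliary lemmas for Statement 4 -/

section BAAux

variable {α : Type*} [Lattice α] [AddCommGroup α] [CovariantClass α α (· + ·) (· ≤ ·)]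

private lemma ba_inf_add_le {a b c : α} (ha : 0 ≤ a) (hb : 0 ≤ b) (hc : 0 ≤ c) :
    a ⊓ (b + c) ≤ a ⊓ b + a ⊓ c := by
  have h1 : a ⊓ b + a ⊓ c = (a + a ⊓ c) ⊓ (b + a ⊓ c) := inf_add a b (a ⊓ c)
  rw [h1, add_inf, add_inf]
  refine le_inf (le_inf ?_ ?_) (le_inf ?_ ?_)
  · exact inf_le_left.trans (le_add_of_nonneg_right ha)
  · exact inf_le_left.trans (le_add_of_nonneg_right hc)
  · exact inf_le_left.trans (le_add_of_nonneg_left hb)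
  · exact inf_le_right

private lemma ba_neg_le_neg {a b : α} (h : a ≤ b) : -b ≤ -a := by
  calc -b = -a - b + a := by abel
    _ ≤ -a - b + b := add_le_add le_rfl h
    _ = -a := by abel

private lemma ba_neg_le {a b : α} : -a ≤ b ↔ -b ≤ a :=
  ⟨fun h => by simpa using ba_neg_le_neg h, fun h => by simpa using ba_neg_le_neg h⟩

private lemma ba_le_neg {a b : α} : a ≤ -b ↔ b ≤ -a :=
  ⟨fun h => by simpa using ba_neg_le_neg h, fun h => by simpa using ba_neg_le_neg h⟩

private lemma ba_inf_le_zero {a b c d : α} (h1 : a ≤ c) (h2 : b ≤ d) (h3 : c ⊓ d = 0)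
    (ha : 0 ≤ a) (hb : 0 ≤ b) : a ⊓ b = 0 :=
  le_antisymm ((inf_le_inf h1 h2).trans h3.le) (le_inf ha hb)

private lemma ba_disj_add {a b c : α} (ha : 0 ≤ a) (hb : 0 ≤ b) (hc : 0 ≤ c)
    (hab : a ⊓ b = 0) (hac : a ⊓ c = 0) : a ⊓ (b + c) = 0 :=
  le_antisymm (by simpa [hab, hac] using ba_inf_add_le ha hb hc)
    (le_inf ha (add_nonneg hb hc))

private lemma ba_comp_nonneg {e p : α} (hp : p ∈ Comp e) : 0 ≤ p := by
  have h : p ⊓ (e - p) = 0 := hp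
  rw [← h]; exact inf_le_left

private lemma ba_comp_sub_nonneg {e p : α} (hp : p ∈ Comp e) : 0 ≤ e - p := by
  have h : p ⊓ (e - p) = 0 := hp
  rw [← h]; exact inf_le_right

private lemma ba_comp_le {e p : α} (hp : p ∈ Comp e) : p ≤ e :=
  sub_nonneg.mp (ba_comp_sub_nonneg hp)

private lemma ba_zero_comp {e : α} (h : 0 ≤ e) : (0 : α) ∈ Comp e := by
  show (0 : α) ⊓ (e - 0) = 0
  rw [sub_zero]
  exact inf_eq_left.mpr h

private lemma ba_comp_inf {e p q : α} (hp : p ∈ Comp e) (hq : q ∈ Comp e) :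
    p ⊓ q ∈ Comp e := by
  have h0 : 0 ≤ p ⊓ q := le_inf (ba_comp_nonneg hp) (ba_comp_nonneg hq)
  have hb : (p ⊓ q) ⊓ (e - p) = 0 :=
    ba_inf_le_zero inf_le_left le_rfl hp h0 (ba_comp_sub_nonneg hp)
  have hc : (p ⊓ q) ⊓ (e - q) = 0 :=
    ba_inf_le_zero inf_le_right le_rfl hq h0 (ba_comp_sub_nonneg hq)
  have key : (p ⊓ q) ⊓ ((e - p) + (e - q)) = 0 :=
    ba_disj_add h0 (ba_comp_sub_nonneg hp) (ba_comp_sub_nonneg hq) hb hc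
  show (p ⊓ q) ⊓ (e - p ⊓ q) = 0
  refine le_antisymm (le_trans (inf_le_inf_left _ ?_) key.le) (le_inf h0 ?_)
  · rw [sub_inf]
    exact sup_le (le_add_of_nonneg_right (ba_comp_sub_nonneg hq))
      (le_add_of_nonneg_left (ba_comp_sub_nonneg hp))
  · rw [sub_inf]
    exact (ba_comp_sub_nonneg hp).trans le_sup_left

private lemma ba_comp_add {e p q : α} (hp : p ∈ Comp e) (hq : q ∈ Comp e)
    (hpq : p ⊓ q = 0) : p + q ∈ Comp e := by
  have hsum : p + q ≤ e := by
    have h := inf_add_sup p q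
    rw [hpq, zero_add] at h
    rw [← h]
    exact sup_le (ba_comp_le hp) (ba_comp_le hq)
  have ha : 0 ≤ e - (p + q) := sub_nonneg.mpr hsum
  have h1 : p ⊓ (e - (p + q)) = 0 :=
    ba_inf_le_zero le_rfl (sub_le_sub_left (le_add_of_nonneg_right (ba_comp_nonneg hq)) e)
      hp (ba_comp_nonneg hp) ha
  have h2 : q ⊓ (e - (p + q)) = 0 :=
    ba_inf_le_zero le_rfl (sub_le_sub_left (le_add_of_nonneg_left (ba_comp_nonneg hp)) e)
      hq (ba_comp_nonneg hq) ha
  show (p + q) ⊓ (e - (p + q)) = 0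
  rw [inf_comm]
  exact ba_disj_add ha (ba_comp_nonneg hp) (ba_comp_nonneg hq)
    (by rw [inf_comm]; exact h1) (by rw [inf_comm]; exact h2)

private lemma ba_comp_sub {e p q : α} (hp : p ∈ Comp e) (hq : q ∈ Comp e)
    (hle : q ≤ p) : p - q ∈ Comp e := by
  have ha : 0 ≤ p - q := sub_nonneg.mpr hle
  have h1 : (p - q) ⊓ (e - p) = 0 :=
    ba_inf_le_zero (sub_le_self p (ba_comp_nonneg hq)) le_rfl hp ha (ba_comp_sub_nonneg hp)
  have h2 : (p - q) ⊓ q = 0 := by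
    have hq' : (e - q) ⊓ q = 0 := by rw [inf_comm]; exact hq
    exact ba_inf_le_zero (sub_le_sub_right (ba_comp_le hp) q) le_rfl hq' ha (ba_comp_nonneg hq)
  have key : (p - q) ⊓ ((e - p) + q) = 0 :=
    ba_disj_add ha (ba_comp_sub_nonneg hp) (ba_comp_nonneg hq) h1 h2
  show (p - q) ⊓ (e - (p - q)) = 0
  rw [show e - (p - q) = (e - p) + q by abel]
  exact key

private lemma ba_disj_sub {e p q : α} (hp : p ∈ Comp e) (hq : q ∈ Comp e)
    (hle : q ≤ p) : q ⊓ (p - q) = 0 := by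
  have hq' : q ⊓ (e - q) = 0 := hq
  exact ba_inf_le_zero le_rfl (sub_le_sub_right (ba_comp_le hp) q) hq'
    (ba_comp_nonneg hq) (sub_nonneg.mpr hle)

private lemma ba_decomp {a b c : α} (ha : 0 ≤ a) (hb : 0 ≤ b) (hc : 0 ≤ c)
    (hbc : b ⊓ c = 0) (hle : a ≤ b + c) : a = a ⊓ b + a ⊓ c := by
  refine le_antisymm ?_ ?_
  · calc a = a ⊓ (b + c) := (inf_eq_left.mpr hle).symm
      _ ≤ a ⊓ b + a ⊓ c := ba_inf_add_le ha hb hc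
  · have hd : (a ⊓ b) ⊓ (a ⊓ c) = 0 :=
      ba_inf_le_zero inf_le_right inf_le_right hbc (le_inf ha hb) (le_inf ha hc)
    have h := inf_add_sup (a ⊓ b) (a ⊓ c)
    rw [hd, zero_add] at h
    rw [← h]
    exact sup_le inf_le_left inf_le_left

private lemma ba_abs_smul {F : Type*} [Lattice F] [AddCommGroup F]
    [CovariantClass F F (· + ·) (· ≤ ·)] [Module ℝ F] [PosSMulMono ℝ F]
    (r : ℝ) (x : F) : |r • x| ≤ |r| • |x| := by
  have key : ∀ (s : ℝ), 0 ≤ s → ∀ y : F, |s • y| ≤ s • |y| := by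
    intro s hs y
    refine abs_le'.mpr ⟨smul_le_smul_of_nonneg_left (le_abs_self y) hs, ?_⟩
    rw [← smul_neg]
    exact smul_le_smul_of_nonneg_left (neg_le_abs y) hs
  rcases le_total 0 r with h | h
  · rw [abs_of_nonneg h]
    exact key r h x
  · rw [abs_of_nonpos h]
    have h2 := key (-r) (neg_nonneg.mpr h) (-x)
    rwa [neg_smul_neg, abs_neg] at h2

end BAAux

section BAMain

variable {E : Type u} [Lattice E] [AddCommGroup E] [CovariantClass E E (· + ·) (· ≤ ·)]
variable {F : Type v} [ConditionallyCompleteLattice F] [AddCommGroup F]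
  [CovariantClass F F (· + ·) (· ≤ ·)]

private lemma ba_charge_split {e : E} {ξ : E → F} (hξ : IsChargeOn e ξ) {p q : E}
    (hp : p ∈ Comp e) (hq : q ∈ Comp e) (hle : q ≤ p) : ξ p = ξ q + ξ (p - q) := by
  have h := hξ.2 q (p - q) hq (ba_comp_sub hp hq hle) (ba_disj_sub hp hq hle)
  rw [show q + (p - q) = p by abel] at h
  exact h

private lemma ba_neg_mem {e : E} {μ : E → F} (hμ : μ ∈ baSet e) :
    (fun p => -(μ p)) ∈ baSet e := by
  obtain ⟨⟨h0, hadd⟩, g, hg0, hg⟩ := hμ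
  exact ⟨⟨by simp [h0], fun p q hp hq hpq => by
      show -(μ (p + q)) = -(μ p) + -(μ q)
      rw [hadd p q hp hq hpq, neg_add]⟩,
    g, hg0, fun p hp => by simpa using hg p hp⟩

private lemma ba_zero_mem {e : E} : (0 : E → F) ∈ baSet e :=
  ⟨⟨rfl, fun _ _ _ _ _ => by simp⟩, 0, le_rfl, fun p _ => by simp⟩

private lemma ba_set_abs {e : E} {μ ν : E → F} {gμ gν : F}
    (hgμ : ∀ p ∈ Comp e, |μ p| ≤ gμ) (hgν : ∀ p ∈ Comp e, |ν p| ≤ gν)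
    {p : E} (hp : p ∈ Comp e) :
    ∀ v ∈ {v | ∃ q, q ∈ Comp e ∧ q ≤ p ∧ v = μ q + ν (p - q)}, |v| ≤ gμ + gν := by
  rintro v ⟨q, hq, hle, rfl⟩
  exact (abs_add_le _ _).trans (add_le_add (hgμ q hq) (hgν _ (ba_comp_sub hp hq hle)))

private lemma ba_mem_self {e : E} {μ ν : E → F} (hν0 : ν 0 = 0) {p : E} (hp : p ∈ Comp e) :
    μ p ∈ {v | ∃ q, q ∈ Comp e ∧ q ≤ p ∧ v = μ q + ν (p - q)} :=
  ⟨p, hp, le_rfl, by simp [hν0]⟩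

private lemma ba_mem_right {e : E} (h0e : (0 : E) ≤ e) {μ ν : E → F} (hμ0 : μ 0 = 0) {p : E}
    (hp : p ∈ Comp e) :
    ν p ∈ {v | ∃ q, q ∈ Comp e ∧ q ≤ p ∧ v = μ q + ν (p - q)} :=
  ⟨0, ba_zero_comp h0e, ba_comp_nonneg hp, by simp [hμ0]⟩

private lemma ba_csInf_neg {S : Set F} (hne : S.Nonempty) (hbdd : BddBelow S) :
    sInf S = -sSup (Neg.neg '' S) := by
  obtain ⟨b, hb⟩ := hbdd
  have hbdd' : BddAbove (Neg.neg '' S) := ⟨-b, by rintro _ ⟨s, hs, rfl⟩; exact ba_neg_le_neg (hb hs)⟩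
  have hlub : IsLUB (Neg.neg '' S) (sSup (Neg.neg '' S)) := isLUB_csSup (hne.image _) hbdd'
  refine IsGLB.csInf_eq ⟨fun s hs => ?_, fun c hc => ?_⟩ hne
  · rw [ba_neg_le]
    exact hlub.1 ⟨s, hs, rfl⟩
  · rw [ba_le_neg]
    exact hlub.2 (by rintro _ ⟨s, hs, rfl⟩; exact ba_neg_le_neg (hc hs))

private lemma ba_sup_isLUB {e : E} (h0e : (0 : E) ≤ e) {μ ν : E → F}
    (hμ : μ ∈ baSet e) (hν : ν ∈ baSet e) :
    IsLUBba e {μ, ν} (chSupAt e μ ν) := by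
  obtain ⟨⟨hμ0, hμadd⟩, gμ, hgμ0, hgμ⟩ := hμ
  obtain ⟨⟨hν0, hνadd⟩, gν, hgν0, hgν⟩ := hν
  have hne : ∀ p, p ∈ Comp e →
      Set.Nonempty {v | ∃ q, q ∈ Comp e ∧ q ≤ p ∧ v = μ q + ν (p - q)} :=
    fun p hp => ⟨ν p, ba_mem_right h0e hμ0 hp⟩
  have hbdd : ∀ p, p ∈ Comp e →
      BddAbove {v | ∃ q, q ∈ Comp e ∧ q ≤ p ∧ v = μ q + ν (p - q)} :=
    fun p hp => ⟨gμ + gν, fun v hv => (le_abs_self v).trans (ba_set_abs hgμ hgν hp v hv)⟩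
  refine ⟨⟨⟨?_, ?_⟩, gμ + gν, add_nonneg hgμ0 hgν0, ?_⟩, ?_, ?_⟩
  · -- value at 0
    have hset : {v | ∃ q, q ∈ Comp e ∧ q ≤ (0 : E) ∧ v = μ q + ν (0 - q)} = {(0 : F)} := by
      ext v
      constructor
      · rintro ⟨q, hq, hle, rfl⟩
        have hq0 : q = 0 := le_antisymm hle (ba_comp_nonneg hq)
        simp [hq0, hμ0, hν0]
      · intro hv
        rw [Set.mem_singleton_iff] at hv
        subst hv
        exact ⟨0, ba_zero_comp h0e, le_rfl, by simp [hμ0, hν0]⟩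
    show sSup {v | ∃ q, q ∈ Comp e ∧ q ≤ (0 : E) ∧ v = μ q + ν (0 - q)} = 0
    rw [hset]
    exact csSup_singleton 0
  · -- additivity
    intro p₁ p₂ hp₁ hp₂ hdisj
    have hP : p₁ + p₂ ∈ Comp e := ba_comp_add hp₁ hp₂ hdisj
    have key : ∀ q₁ q₂ : E, q₁ ∈ Comp e → q₂ ∈ Comp e → q₁ ≤ p₁ → q₂ ≤ p₂ →
        (μ q₁ + ν (p₁ - q₁)) + (μ q₂ + ν (p₂ - q₂)) =
          μ (q₁ + q₂) + ν ((p₁ + p₂) - (q₁ + q₂)) := by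
      intro q₁ q₂ hq₁ hq₂ hle₁ hle₂
      have hq12 : q₁ ⊓ q₂ = 0 :=
        ba_inf_le_zero hle₁ hle₂ hdisj (ba_comp_nonneg hq₁) (ba_comp_nonneg hq₂)
      have hr₁ : p₁ - q₁ ∈ Comp e := ba_comp_sub hp₁ hq₁ hle₁
      have hr₂ : p₂ - q₂ ∈ Comp e := ba_comp_sub hp₂ hq₂ hle₂
      have hr12 : (p₁ - q₁) ⊓ (p₂ - q₂) = 0 :=
        ba_inf_le_zero (sub_le_self _ (ba_comp_nonneg hq₁))
          (sub_le_self _ (ba_comp_nonneg hq₂)) hdisj (sub_nonneg.mpr hle₁) (sub_nonneg.mpr hle₂)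
      rw [hμadd _ _ hq₁ hq₂ hq12,
        show (p₁ + p₂) - (q₁ + q₂) = (p₁ - q₁) + (p₂ - q₂) by abel,
        hνadd _ _ hr₁ hr₂ hr12]
      abel
    show sSup {v | ∃ q, q ∈ Comp e ∧ q ≤ p₁ + p₂ ∧ v = μ q + ν ((p₁ + p₂) - q)} =
      sSup {v | ∃ q, q ∈ Comp e ∧ q ≤ p₁ ∧ v = μ q + ν (p₁ - q)} +
      sSup {v | ∃ q, q ∈ Comp e ∧ q ≤ p₂ ∧ v = μ q + ν (p₂ - q)}
    refine le_antisymm ?_ ?_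
    · refine csSup_le (hne _ hP) ?_
      rintro v ⟨q, hq, hle, rfl⟩
      have hq₁ : q ⊓ p₁ ∈ Comp e := ba_comp_inf hq hp₁
      have hq₂ : q ⊓ p₂ ∈ Comp e := ba_comp_inf hq hp₂
      have hdec : q = q ⊓ p₁ + q ⊓ p₂ :=
        ba_decomp (ba_comp_nonneg hq) (ba_comp_nonneg hp₁) (ba_comp_nonneg hp₂) hdisj hle
      have hv : μ q + ν ((p₁ + p₂) - q)
          = (μ (q ⊓ p₁) + ν (p₁ - q ⊓ p₁)) + (μ (q ⊓ p₂) + ν (p₂ - q ⊓ p₂)) := by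
        rw [key _ _ hq₁ hq₂ inf_le_right inf_le_right, ← hdec]
      rw [hv]
      exact add_le_add (le_csSup (hbdd _ hp₁) ⟨_, hq₁, inf_le_right, rfl⟩)
        (le_csSup (hbdd _ hp₂) ⟨_, hq₂, inf_le_right, rfl⟩)
    · refine le_sub_iff_add_le.mp (csSup_le (hne _ hp₁) ?_)
      rintro v₁ ⟨q₁, hq₁, hle₁, rfl⟩
      rw [le_sub_comm]
      refine csSup_le (hne _ hp₂) ?_
      rintro v₂ ⟨q₂, hq₂, hle₂, rfl⟩
      rw [le_sub_iff_add_le, add_comm]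
      refine le_csSup (hbdd _ hP) ?_
      refine ⟨q₁ + q₂, ba_comp_add hq₁ hq₂
        (ba_inf_le_zero hle₁ hle₂ hdisj (ba_comp_nonneg hq₁) (ba_comp_nonneg hq₂)),
        add_le_add hle₁ hle₂, key _ _ hq₁ hq₂ hle₁ hle₂⟩
  · -- order bounded
    intro p hp
    refine abs_le'.mpr ⟨csSup_le (hne p hp)
      (fun v hv => (le_abs_self v).trans (ba_set_abs hgμ hgν hp v hv)), ?_⟩
    rw [ba_neg_le]
    have h1 : |ν p| ≤ gμ + gν := (hgν p hp).trans (le_add_of_nonneg_left hgμ0)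
    have h2 : -(gμ + gν) ≤ ν p := (ba_neg_le_neg h1).trans (ba_neg_le.mpr (neg_le_abs _))
    exact h2.trans (le_csSup (hbdd p hp) (ba_mem_right h0e hμ0 hp))
  · -- upper bound
    rintro ρ hρ
    simp only [Set.mem_insert_iff, Set.mem_singleton_iff] at hρ
    rcases hρ with rfl | rfl
    · exact fun p hp => le_csSup (hbdd p hp) (ba_mem_self hν0 hp)
    · exact fun p hp => le_csSup (hbdd p hp) (ba_mem_right h0e hμ0 hp)
  · -- least upper bound
    rintro ξ ⟨hξc, -⟩ hub p hp
    refine csSup_le (hne p hp) ?_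
    rintro v ⟨q, hq, hle, rfl⟩
    calc μ q + ν (p - q) ≤ ξ q + ξ (p - q) :=
        add_le_add (hub μ (Set.mem_insert _ _) q hq)
          (hub ν (Set.mem_insert_of_mem _ rfl) _ (ba_comp_sub hp hq hle))
      _ = ξ p := (ba_charge_split hξc hp hq hle).symm

private lemma ba_inf_isGLB {e : E} (h0e : (0 : E) ≤ e) {μ ν : E → F}
    (hμ : μ ∈ baSet e) (hν : ν ∈ baSet e) :
    IsGLBba e {μ, ν} (chInfAt e μ ν) := by
  have hμ' := ba_neg_mem hμ
  have hν' := ba_neg_mem hν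
  have hlub := ba_sup_isLUB h0e hμ' hν'
  have hpt : ∀ p ∈ Comp e,
      chInfAt e μ ν p = -(chSupAt e (fun x => -(μ x)) (fun x => -(ν x)) p) := by
    intro p hp
    obtain ⟨⟨hμ0, hμadd⟩, gμ, hgμ0, hgμ⟩ := hμ
    obtain ⟨⟨hν0, hνadd⟩, gν, hgν0, hgν⟩ := hν
    have himg : {v | ∃ q, q ∈ Comp e ∧ q ≤ p ∧ v = -(μ q) + -(ν (p - q))}
        = Neg.neg '' {v | ∃ q, q ∈ Comp e ∧ q ≤ p ∧ v = μ q + ν (p - q)} := by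
      ext v
      constructor
      · rintro ⟨q, hq, hle, rfl⟩
        exact ⟨μ q + ν (p - q), ⟨q, hq, hle, rfl⟩, neg_add _ _⟩
      · rintro ⟨w, ⟨q, hq, hle, rfl⟩, rfl⟩
        exact ⟨q, hq, hle, neg_add _ _⟩
    have hne : Set.Nonempty {v | ∃ q, q ∈ Comp e ∧ q ≤ p ∧ v = μ q + ν (p - q)} :=
      ⟨ν p, ba_mem_right h0e hμ0 hp⟩
    have hbdd : BddBelow {v | ∃ q, q ∈ Comp e ∧ q ≤ p ∧ v = μ q + ν (p - q)} := by
      refine ⟨-(gμ + gν), fun v hv => ?_⟩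
      exact (ba_neg_le_neg (ba_set_abs hgμ hgν hp v hv)).trans (ba_neg_le.mpr (neg_le_abs v))
    show sInf {v | ∃ q, q ∈ Comp e ∧ q ≤ p ∧ v = μ q + ν (p - q)} =
      -sSup {v | ∃ q, q ∈ Comp e ∧ q ≤ p ∧ v = -(μ q) + -(ν (p - q))}
    rw [ba_csInf_neg hne hbdd, himg]
  obtain ⟨⟨⟨hη0, hηadd⟩, g, hg0, hg⟩, hup, hleast⟩ := hlub
  refine ⟨⟨⟨?_, ?_⟩, g, hg0, ?_⟩, ?_, ?_⟩
  · rw [hpt 0 (ba_zero_comp h0e), hη0, neg_zero]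
  · intro p q hp hq hpq
    rw [hpt _ (ba_comp_add hp hq hpq), hpt _ hp, hpt _ hq, hηadd p q hp hq hpq, neg_add]
  · intro p hp
    rw [hpt _ hp, abs_neg]
    exact hg p hp
  · rintro ρ hρ
    simp only [Set.mem_insert_iff, Set.mem_singleton_iff] at hρ
    rcases hρ with rfl | rfl
    · intro p hp
      rw [hpt _ hp, neg_le]
      exact hup _ (Set.mem_insert _ _) p hp
    · intro p hp
      rw [hpt _ hp, neg_le]
      exact hup _ (Set.mem_insert_of_mem _ rfl) p hp
  · rintro ξ hξ hlb p hp
    have hb : ∀ ρ ∈ ({(fun x => -(μ x)), (fun x => -(ν x))} : Set (E → F)),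
        baLe e ρ (fun x => -(ξ x)) := by
      rintro ρ hρ
      simp only [Set.mem_insert_iff, Set.mem_singleton_iff] at hρ
      rcases hρ with rfl | rfl
      · exact fun p hp => ba_neg_le_neg (hlb μ (Set.mem_insert _ _) p hp)
      · exact fun p hp => ba_neg_le_neg (hlb ν (Set.mem_insert_of_mem _ rfl) p hp)
    have h := hleast _ (ba_neg_mem hξ) hb p hp
    rw [hpt _ hp, ba_le_neg]
    exact h

end BAMain

/-- Let `E` be a Riesz space with weak order unit `e` and `F` a
Dedekind complete Riesz space.  Then `ba(C_e,F)`, ordered by `μ ≤ ν` iff `ν − μ` is a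
positive charge, is a Riesz space: it is closed under the vector operations, and for
`μ, ν ∈ ba(C_e,F)` the suprema/infima/modulus/positive and negative parts exist in
`ba(C_e,F)` and are given by the stated formulas. -/
theorem ba_isRieszSpace_and_lattice_formulas
    {E : Type u} [Lattice E] [AddCommGroup E] [Module ℝ E]
    [CovariantClass E E (· + ·) (· ≤ ·)] [PosSMulMono ℝ E]
    {F : Type v} [ConditionallyCompleteLattice F] [AddCommGroup F] [Module ℝ F]
    [CovariantClass F F (· + ·) (· ≤ ·)] [PosSMulMono ℝ F]
    (e : E) (he : IsWeakUnit e) :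
    (∀ μ ∈ baSet (F := F) e, ∀ ν ∈ baSet (F := F) e, (fun p => μ p + ν p) ∈ baSet (F := F) e) ∧
    (∀ μ ∈ baSet (F := F) e, ∀ r : ℝ, (fun p => r • μ p) ∈ baSet (F := F) e) ∧
    (∀ μ ∈ baSet (F := F) e, (fun p => -(μ p)) ∈ baSet (F := F) e) ∧
    (∀ μ ∈ baSet (F := F) e, ∀ ν ∈ baSet (F := F) e,
      IsLUBba e {μ, ν} (chSupAt e μ ν)) ∧
    (∀ μ ∈ baSet (F := F) e, ∀ ν ∈ baSet (F := F) e,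
      IsGLBba e {μ, ν} (chInfAt e μ ν)) ∧
    (∀ μ ∈ baSet (F := F) e, IsLUBba e {μ, fun p => -(μ p)} (chargeAbs e μ)) ∧
    (∀ μ ∈ baSet (F := F) e, IsLUBba e {μ, 0} (chargePos e μ)) ∧
    (∀ μ ∈ baSet (F := F) e, IsLUBba e {fun p => -(μ p), 0} (chargeNeg e μ)) := by
  have h0e : (0 : E) ≤ e := he.1.le
  refine ⟨?_, ?_, ?_, ?_, ?_, ?_, ?_, ?_⟩
  · rintro μ ⟨⟨hμ0, hμadd⟩, gμ, hgμ0, hgμ⟩ ν ⟨⟨hν0, hνadd⟩, gν, hgν0, hgν⟩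
    exact ⟨⟨by simp [hμ0, hν0], fun p q hp hq hpq => by
        show μ (p + q) + ν (p + q) = (μ p + ν p) + (μ q + ν q)
        rw [hμadd p q hp hq hpq, hνadd p q hp hq hpq]; abel⟩,
      gμ + gν, add_nonneg hgμ0 hgν0,
      fun p hp => (abs_add_le _ _).trans (add_le_add (hgμ p hp) (hgν p hp))⟩
  · rintro μ ⟨⟨hμ0, hμadd⟩, gμ, hgμ0, hgμ⟩ r
    refine ⟨⟨by simp [hμ0], fun p q hp hq hpq => by
        show r • μ (p + q) = r • μ p + r • μ q
        rw [hμadd p q hp hq hpq, smul_add]⟩,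
      |r| • gμ, smul_nonneg (abs_nonneg r) hgμ0, fun p hp => ?_⟩
    exact (ba_abs_smul r (μ p)).trans (smul_le_smul_of_nonneg_left (hgμ p hp) (abs_nonneg r))
  · exact fun μ hμ => ba_neg_mem hμ
  · exact fun μ hμ ν hν => ba_sup_isLUB h0e hμ hν
  · exact fun μ hμ ν hν => ba_inf_isGLB h0e hμ hν
  · intro μ hμ
    have h := ba_sup_isLUB h0e hμ (ba_neg_mem hμ)
    have heq : chargeAbs e μ = chSupAt e μ (fun x => -(μ x)) := by
      funext p
      simp only [chargeAbs, chSupAt, sub_eq_add_neg]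
    rw [heq]
    exact h
  · intro μ hμ
    have h := ba_sup_isLUB h0e hμ (ba_zero_mem (e := e))
    have heq : chargePos e μ = chSupAt e μ (0 : E → F) := by
      funext p
      simp only [chargePos, chSupAt, Pi.zero_apply, add_zero]
    rw [heq]
    exact h
  · intro μ hμ
    have h := ba_sup_isLUB h0e (ba_neg_mem hμ) (ba_zero_mem (e := e))
    have heq : chargeNeg e μ = chSupAt e (fun x => -(μ x)) (0 : E → F) := by
      funext p
      simp only [chargeNeg, chSupAt, Pi.zero_apply, add_zero]
    rw [heq]
    exact h

end RieszPaper

end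
end

section
/- Let E be a Riesz space with weak order unit e and F a Dedekind complete Riesz space. For every net (μ_α) in ba(C_e,F) and μ ∈ ba(C_e,F), one has μ_α ↑ μ in ba(C_e,F) if and only if μ_α(p) ↑ μ(p) in F for every p ∈ C_e. In particular, ba(C_e,F) is a Dedekind complete Riesz space. -/
open scoped Classical

noncomputable section

namespace RieszPaper

universe u v w

/-! ### Auxiliary lemmas for Statement 5 -/

section BaSupAux
set_option linter.unusedSectionVars false
set_option linter.unusedVariables false

variable {E : Type*} [Lattice E] [AddCommGroup E] [CovariantClass E E (· + ·) (· ≤ ·)]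
variable {F : Type*} [ConditionallyCompleteLattice F] [AddCommGroup F]
  [CovariantClass F F (· + ·) (· ≤ ·)]

private def oacm (α : Type*) [Lattice α] [AddCommGroup α]
    [CovariantClass α α (· + ·) (· ≤ ·)] : IsOrderedAddMonoid α :=
  { add_le_add_left := fun _ _ h c => by gcongr }

private lemma dsup_inf (a b c : E) : (a ⊔ b) ⊓ c = a ⊓ c ⊔ b ⊓ c := by
  letI := AddCommGroup.toDistribLattice E
  exact inf_sup_right a b c

private lemma dinf_sup (a b c : E) : a ⊓ (b ⊔ c) = a ⊓ b ⊔ a ⊓ c := by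
  letI := AddCommGroup.toDistribLattice E
  exact inf_sup_left a b c

private lemma comp_nonneg' {e p : E} (hp : p ∈ Comp e) : 0 ≤ p := by
  have h : p ⊓ (e - p) = 0 := hp
  rw [← h]; exact inf_le_left

private lemma comp_sub_nonneg {e p : E} (hp : p ∈ Comp e) : 0 ≤ e - p := by
  have h : p ⊓ (e - p) = 0 := hp
  rw [← h]; exact inf_le_right

private lemma disj_add_eq_sup {a b : E} (h : a ⊓ b = 0) : a + b = a ⊔ b := by
  have h2 := inf_add_sup a b
  rw [h, zero_add] at h2
  exact h2.symm

private lemma zero_mem_comp {e : E} (he : (0 : E) ≤ e) : (0 : E) ∈ Comp e := by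
  show (0 : E) ⊓ (e - 0) = 0
  rw [sub_zero]
  exact inf_eq_left.mpr he

private lemma comp_inf' {e p q : E} (hp : p ∈ Comp e) (hq : q ∈ Comp e) :
    p ⊓ q ∈ Comp e := by
  have hp' : p ⊓ (e - p) = 0 := hp
  have hq' : q ⊓ (e - q) = 0 := hq
  show p ⊓ q ⊓ (e - p ⊓ q) = 0
  rw [sub_inf]
  apply le_antisymm
  · rw [dinf_sup]
    apply sup_le
    · calc p ⊓ q ⊓ (e - p) ≤ p ⊓ (e - p) := inf_le_inf_right _ inf_le_left
        _ = 0 := hp'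
    · calc p ⊓ q ⊓ (e - q) ≤ q ⊓ (e - q) := inf_le_inf_right _ inf_le_right
        _ = 0 := hq'
  · exact le_inf (le_inf (comp_nonneg' hp) (comp_nonneg' hq))
      (le_sup_of_le_left (comp_sub_nonneg hp))

private lemma comp_add' {e p q : E} (hp : p ∈ Comp e) (hq : q ∈ Comp e)
    (h : p ⊓ q = 0) : p + q ∈ Comp e := by
  have hp' : p ⊓ (e - p) = 0 := hp
  have hq' : q ⊓ (e - q) = 0 := hq
  show (p + q) ⊓ (e - (p + q)) = 0
  rw [disj_add_eq_sup h, sub_sup]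
  apply le_antisymm
  · rw [dsup_inf]
    apply sup_le
    · calc p ⊓ ((e - p) ⊓ (e - q)) ≤ p ⊓ (e - p) := inf_le_inf_left p inf_le_left
        _ = 0 := hp'
    · calc q ⊓ ((e - p) ⊓ (e - q)) ≤ q ⊓ (e - q) := inf_le_inf_left q inf_le_right
        _ = 0 := hq'
  · exact le_inf (le_sup_of_le_left (comp_nonneg' hp))
      (le_inf (comp_sub_nonneg hp) (comp_sub_nonneg hq))

private lemma comp_split {e r p q : E} (hr : r ∈ Comp e) (hp : p ∈ Comp e)
    (hq : q ∈ Comp e) (hpq : p ⊓ q = 0) (hle : r ≤ p + q) :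
    (r ⊓ p) ⊓ (r ⊓ q) = 0 ∧ r = r ⊓ p + r ⊓ q := by
  have hd : (r ⊓ p) ⊓ (r ⊓ q) = 0 := by
    apply le_antisymm
    · calc (r ⊓ p) ⊓ (r ⊓ q) ≤ p ⊓ q := inf_le_inf inf_le_right inf_le_right
        _ = 0 := hpq
    · exact le_inf (le_inf (comp_nonneg' hr) (comp_nonneg' hp))
        (le_inf (comp_nonneg' hr) (comp_nonneg' hq))
  refine ⟨hd, ?_⟩
  have h1 : r = r ⊓ (p ⊔ q) :=
    (inf_eq_left.mpr (by rw [← disj_add_eq_sup hpq]; exact hle)).symm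
  rw [disj_add_eq_sup hd, ← dinf_sup]
  exact h1

private lemma sum_comp {e : E} (he : (0 : E) ≤ e) {ι' : Type*} (s : Finset ι')
    (q : ι' → E) (hc : ∀ i ∈ s, q i ∈ Comp e)
    (hd : ∀ i ∈ s, ∀ j ∈ s, i ≠ j → q i ⊓ q j = 0) :
    (∑ i ∈ s, q i) ∈ Comp e ∧
      (∀ x : E, 0 ≤ x → (∀ i ∈ s, q i ⊓ x = 0) → (∑ i ∈ s, q i) ⊓ x = 0) ∧
      (∀ c : E, 0 ≤ c → (∀ i ∈ s, q i ≤ c) → (∑ i ∈ s, q i) ≤ c) := by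
  classical
  induction s using Finset.induction_on with
  | empty =>
      refine ⟨?_, ?_, ?_⟩
      · rw [Finset.sum_empty]; exact zero_mem_comp he
      · intro x hx _; rw [Finset.sum_empty]; exact inf_eq_left.mpr hx
      · intro c hc' _; rw [Finset.sum_empty]; exact hc'
  | @insert a s' ha ih =>
      have hca : q a ∈ Comp e := hc a (Finset.mem_insert_self a s')
      have hc' : ∀ i ∈ s', q i ∈ Comp e := fun i hi => hc i (Finset.mem_insert_of_mem hi)
      have hd' : ∀ i ∈ s', ∀ j ∈ s', i ≠ j → q i ⊓ q j = 0 := fun i hi j hj hij =>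
        hd i (Finset.mem_insert_of_mem hi) j (Finset.mem_insert_of_mem hj) hij
      obtain ⟨hA, hAdisj, hAle⟩ := ih hc' hd'
      have hAa : (∑ i ∈ s', q i) ⊓ q a = 0 :=
        hAdisj (q a) (comp_nonneg' hca) (fun i hi =>
          hd i (Finset.mem_insert_of_mem hi) a (Finset.mem_insert_self a s')
            (fun h => ha (h ▸ hi)))
      have haA : q a ⊓ (∑ i ∈ s', q i) = 0 := by rw [inf_comm]; exact hAa
      rw [Finset.sum_insert ha]
      refine ⟨comp_add' hca hA haA, ?_, ?_⟩
      · intro x hx hdx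
        rw [disj_add_eq_sup haA, dsup_inf]
        have h1 := hdx a (Finset.mem_insert_self a s')
        have h2 := hAdisj x hx (fun i hi => hdx i (Finset.mem_insert_of_mem hi))
        rw [h1, h2, sup_idem]
      · intro c hc0 hlec
        rw [disj_add_eq_sup haA]
        exact sup_le (hlec a (Finset.mem_insert_self a s'))
          (hAle c hc0 (fun i hi => hlec i (Finset.mem_insert_of_mem hi)))

private lemma charge_sum {e : E} (he : (0 : E) ≤ e) {μ : E → F}
    (hμ : IsChargeOn e μ) {ι' : Type*} (s : Finset ι') (q : ι' → E)
    (hc : ∀ i ∈ s, q i ∈ Comp e)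
    (hd : ∀ i ∈ s, ∀ j ∈ s, i ≠ j → q i ⊓ q j = 0) :
    μ (∑ i ∈ s, q i) = ∑ i ∈ s, μ (q i) := by
  classical
  induction s using Finset.induction_on with
  | empty => rw [Finset.sum_empty, Finset.sum_empty]; exact hμ.1
  | @insert a s' ha ih =>
      have hca : q a ∈ Comp e := hc a (Finset.mem_insert_self a s')
      have hc' : ∀ i ∈ s', q i ∈ Comp e := fun i hi => hc i (Finset.mem_insert_of_mem hi)
      have hd' : ∀ i ∈ s', ∀ j ∈ s', i ≠ j → q i ⊓ q j = 0 := fun i hi j hj hij =>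
        hd i (Finset.mem_insert_of_mem hi) j (Finset.mem_insert_of_mem hj) hij
      obtain ⟨hA, hAdisj, _⟩ := sum_comp he s' q hc' hd'
      have haA : q a ⊓ (∑ i ∈ s', q i) = 0 := by
        rw [inf_comm]
        exact hAdisj (q a) (comp_nonneg' hca) (fun i hi =>
          hd i (Finset.mem_insert_of_mem hi) a (Finset.mem_insert_self a s')
            (fun h => ha (h ▸ hi)))
      rw [Finset.sum_insert ha, Finset.sum_insert ha,
        hμ.2 (q a) (∑ i ∈ s', q i) hca hA haA, ih hc' hd']

private lemma add_csSup_le {T : F} {V₁ V₂ : Set F} (h₁ : V₁.Nonempty)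
    (h₂ : V₂.Nonempty) (H : ∀ v₁ ∈ V₁, ∀ v₂ ∈ V₂, v₁ + v₂ ≤ T) :
    sSup V₁ + sSup V₂ ≤ T := by
  have s2 : sSup V₂ ≤ T - sSup V₁ := by
    apply csSup_le h₂
    intro v₂ hv₂
    rw [le_sub_comm]
    apply csSup_le h₁
    intro v₁ hv₁
    exact le_sub_iff_add_le.mpr (H v₁ hv₁ v₂ hv₂)
  have h3 := le_sub_iff_add_le.mp s2
  rw [add_comm]
  exact h3

private lemma abs_le_of_between {x l u g₁ g₂ : F} (hl : l ≤ x) (hu : x ≤ u)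
    (h₁ : |l| ≤ g₁) (h₂ : |u| ≤ g₂) (hg₁ : 0 ≤ g₁) (hg₂ : 0 ≤ g₂) :
    |x| ≤ g₁ + g₂ := by
  rw [abs_le']
  constructor
  · calc x ≤ u := hu
      _ ≤ |u| := le_abs_self u
      _ ≤ g₂ := h₂
      _ ≤ g₁ + g₂ := le_add_of_nonneg_left hg₁
  · calc -x ≤ -l := neg_le_neg_iff.mpr hl
      _ ≤ |l| := neg_le_abs l
      _ ≤ g₁ := h₁
      _ ≤ g₁ + g₂ := le_add_of_nonneg_right hg₂

private lemma csSup_range_add {ι : Type*} [Preorder ι] [Nonempty ι]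
    (hdir : IsDirected ι (· ≤ ·)) (f g : ι → F)
    (hf : ∀ a b, a ≤ b → f a ≤ f b) (hg : ∀ a b, a ≤ b → g a ≤ g b)
    (Bf : F) (hBf : ∀ a, f a ≤ Bf) (Bg : F) (hBg : ∀ a, g a ≤ Bg) :
    sSup (Set.range fun a => f a + g a) = sSup (Set.range f) + sSup (Set.range g) := by
  haveI := hdir
  apply le_antisymm
  · apply csSup_le (Set.range_nonempty _)
    rintro _ ⟨a, rfl⟩
    exact add_le_add
      (le_csSup ⟨Bf, by rintro _ ⟨b, rfl⟩; exact hBf b⟩ ⟨a, rfl⟩)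
      (le_csSup ⟨Bg, by rintro _ ⟨b, rfl⟩; exact hBg b⟩ ⟨a, rfl⟩)
  · apply add_csSup_le (Set.range_nonempty f) (Set.range_nonempty g)
    rintro _ ⟨a, rfl⟩ _ ⟨b, rfl⟩
    obtain ⟨c, hac, hbc⟩ := directed_of (· ≤ ·) a b
    calc f a + g b ≤ f c + g c := add_le_add (hf a c hac) (hg b c hbc)
      _ ≤ sSup (Set.range fun a => f a + g a) :=
        le_csSup ⟨Bf + Bg, by rintro _ ⟨d, rfl⟩; exact add_le_add (hBf d) (hBg d)⟩
          ⟨c, rfl⟩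

private def valSet (e : E) (S : Set (E → F)) (p : E) : Set F :=
  {v | ∃ (n : ℕ) (q : Fin n → E) (μs : Fin n → E → F),
    (∀ i, q i ∈ Comp e) ∧ (∀ i j : Fin n, i ≠ j → q i ⊓ q j = 0) ∧
    (∑ i, q i) = p ∧ (∀ i, μs i ∈ S) ∧ v = ∑ i, μs i (q i)}

private lemma self_mem_valSet {e : E} {S : Set (E → F)} {μ₀ : E → F}
    (hμ₀ : μ₀ ∈ S) {p : E} (hp : p ∈ Comp e) : μ₀ p ∈ valSet e S p := by
  refine ⟨1, fun _ => p, fun _ => μ₀, fun _ => hp, ?_, ?_, fun _ => hμ₀, ?_⟩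
  · intro i j hij
    exact absurd (Subsingleton.elim i j) hij
  · simp
  · simp

private lemma valSet_le {e : E} (he : (0 : E) ≤ e) {S : Set (E → F)} {ξ : E → F}
    (hξ : IsChargeOn e ξ) (hub : ∀ μ ∈ S, baLe e μ ξ) {p : E} {v : F}
    (hv : v ∈ valSet e S p) : v ≤ ξ p := by
  obtain ⟨n, q, μs, hc, hd, hsum, hmem, rfl⟩ := hv
  letI := oacm F
  calc (∑ i, μs i (q i)) ≤ ∑ i, ξ (q i) :=
        Finset.sum_le_sum (fun i _ => hub (μs i) (hmem i) (q i) (hc i))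
    _ = ξ p := by
        rw [← charge_sum he hξ Finset.univ q (fun i _ => hc i)
          (fun i _ j _ hij => hd i j hij), hsum]

private lemma valSet_zero {e : E} (he : (0 : E) ≤ e) {S : Set (E → F)}
    (hS : ∀ μ ∈ S, IsChargeOn e μ) : valSet e S (0 : E) = {0} := by
  apply Set.eq_singleton_iff_unique_mem.mpr
  constructor
  · exact ⟨0, Fin.elim0, Fin.elim0, fun i => i.elim0, fun i => i.elim0, by simp,
      fun i => i.elim0, by simp⟩
  · rintro v ⟨n, q, μs, hc, hd, hsum, hmem, rfl⟩
    have hq0 : ∀ i, q i = 0 := by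
      intro i
      apply le_antisymm _ (comp_nonneg' (hc i))
      letI := oacm E
      calc q i ≤ ∑ j, q j :=
            Finset.single_le_sum (fun j _ => comp_nonneg' (hc j)) (Finset.mem_univ i)
        _ = 0 := hsum
    calc (∑ i, μs i (q i)) = ∑ _i : Fin n, (0 : F) :=
          Finset.sum_congr rfl (fun i _ => by rw [hq0 i]; exact (hS (μs i) (hmem i)).1)
      _ = 0 := by simp

private lemma valSet_split {e : E} (he : (0 : E) ≤ e) {S : Set (E → F)}
    (hS : ∀ μ ∈ S, IsChargeOn e μ) {p₁ p₂ : E} (hp₁ : p₁ ∈ Comp e)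
    (hp₂ : p₂ ∈ Comp e) (h12 : p₁ ⊓ p₂ = 0) {v : F}
    (hv : v ∈ valSet e S (p₁ + p₂)) :
    ∃ v₁ ∈ valSet e S p₁, ∃ v₂ ∈ valSet e S p₂, v = v₁ + v₂ := by
  obtain ⟨n, q, μs, hc, hd, hsum, hmem, rfl⟩ := hv
  have hqle : ∀ i, q i ≤ p₁ + p₂ := by
    intro i
    rw [← hsum]
    letI := oacm E
    exact Finset.single_le_sum (fun j _ => comp_nonneg' (hc j)) (Finset.mem_univ i)
  have hsplit : ∀ i, (q i ⊓ p₁) ⊓ (q i ⊓ p₂) = 0 ∧ q i = q i ⊓ p₁ + q i ⊓ p₂ :=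
    fun i => comp_split (hc i) hp₁ hp₂ h12 (hqle i)
  have hc₁ : ∀ i, q i ⊓ p₁ ∈ Comp e := fun i => comp_inf' (hc i) hp₁
  have hc₂ : ∀ i, q i ⊓ p₂ ∈ Comp e := fun i => comp_inf' (hc i) hp₂
  have hd₁ : ∀ i j : Fin n, i ≠ j → (q i ⊓ p₁) ⊓ (q j ⊓ p₁) = 0 := by
    intro i j hij
    apply le_antisymm
    · calc (q i ⊓ p₁) ⊓ (q j ⊓ p₁) ≤ q i ⊓ q j := inf_le_inf inf_le_left inf_le_left
        _ = 0 := hd i j hij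
    · exact le_inf (le_inf (comp_nonneg' (hc i)) (comp_nonneg' hp₁))
        (le_inf (comp_nonneg' (hc j)) (comp_nonneg' hp₁))
  have hd₂ : ∀ i j : Fin n, i ≠ j → (q i ⊓ p₂) ⊓ (q j ⊓ p₂) = 0 := by
    intro i j hij
    apply le_antisymm
    · calc (q i ⊓ p₂) ⊓ (q j ⊓ p₂) ≤ q i ⊓ q j := inf_le_inf inf_le_left inf_le_left
        _ = 0 := hd i j hij
    · exact le_inf (le_inf (comp_nonneg' (hc i)) (comp_nonneg' hp₂))
        (le_inf (comp_nonneg' (hc j)) (comp_nonneg' hp₂))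
  have hA := sum_comp he Finset.univ (fun i => q i ⊓ p₁) (fun i _ => hc₁ i)
    (fun i _ j _ hij => hd₁ i j hij)
  have hB := sum_comp he Finset.univ (fun i => q i ⊓ p₂) (fun i _ => hc₂ i)
    (fun i _ j _ hij => hd₂ i j hij)
  have hAle : (∑ i, q i ⊓ p₁) ≤ p₁ :=
    hA.2.2 p₁ (comp_nonneg' hp₁) (fun i _ => inf_le_right)
  have hBle : (∑ i, q i ⊓ p₂) ≤ p₂ :=
    hB.2.2 p₂ (comp_nonneg' hp₂) (fun i _ => inf_le_right)
  have hAB : (∑ i, q i ⊓ p₁) + (∑ i, q i ⊓ p₂) = p₁ + p₂ := by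
    rw [← Finset.sum_add_distrib, ← hsum]
    exact Finset.sum_congr rfl (fun i _ => ((hsplit i).2).symm)
  have hAp : (∑ i, q i ⊓ p₁) = p₁ := by
    have h0 : p₁ - (∑ i, q i ⊓ p₁) = (∑ i, q i ⊓ p₂) - p₂ := by
      rw [sub_eq_sub_iff_add_eq_add, ← hAB, add_comm]
    have h1 : (0 : E) ≤ p₁ - (∑ i, q i ⊓ p₁) := sub_nonneg.mpr hAle
    have h2 : (∑ i, q i ⊓ p₂) - p₂ ≤ 0 := sub_nonpos.mpr hBle
    have h3 : p₁ - (∑ i, q i ⊓ p₁) = 0 := le_antisymm (h0 ▸ h2) h1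
    exact (sub_eq_zero.mp h3).symm
  have hBp : (∑ i, q i ⊓ p₂) = p₂ := by
    have := hAB
    rw [hAp] at this
    exact add_left_cancel this
  refine ⟨∑ i, μs i (q i ⊓ p₁), ⟨n, fun i => q i ⊓ p₁, μs, hc₁, hd₁, hAp, hmem, rfl⟩,
    ∑ i, μs i (q i ⊓ p₂), ⟨n, fun i => q i ⊓ p₂, μs, hc₂, hd₂, hBp, hmem, rfl⟩, ?_⟩
  rw [← Finset.sum_add_distrib]
  apply Finset.sum_congr rfl
  intro i _
  have h := (hS (μs i) (hmem i)).2 (q i ⊓ p₁) (q i ⊓ p₂) (hc₁ i) (hc₂ i) (hsplit i).1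
  rw [← (hsplit i).2] at h
  exact h

private lemma valSet_add {e : E} {S : Set (E → F)} {p₁ p₂ : E}
    (hp₁ : p₁ ∈ Comp e) (hp₂ : p₂ ∈ Comp e) (h12 : p₁ ⊓ p₂ = 0) {v₁ v₂ : F}
    (h₁ : v₁ ∈ valSet e S p₁) (h₂ : v₂ ∈ valSet e S p₂) :
    v₁ + v₂ ∈ valSet e S (p₁ + p₂) := by
  obtain ⟨n₁, q₁, μ₁, hc₁, hd₁, hs₁, hm₁, rfl⟩ := h₁
  obtain ⟨n₂, q₂, μ₂, hc₂, hd₂, hs₂, hm₂, rfl⟩ := h₂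
  have hq₁le : ∀ i, q₁ i ≤ p₁ := by
    intro i
    rw [← hs₁]
    letI := oacm E
    exact Finset.single_le_sum (fun j _ => comp_nonneg' (hc₁ j)) (Finset.mem_univ i)
  have hq₂le : ∀ i, q₂ i ≤ p₂ := by
    intro i
    rw [← hs₂]
    letI := oacm E
    exact Finset.single_le_sum (fun j _ => comp_nonneg' (hc₂ j)) (Finset.mem_univ i)
  have hcross : ∀ i j, q₁ i ⊓ q₂ j = 0 := by
    intro i j
    apply le_antisymm
    · calc q₁ i ⊓ q₂ j ≤ p₁ ⊓ p₂ := inf_le_inf (hq₁le i) (hq₂le j)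
        _ = 0 := h12
    · exact le_inf (comp_nonneg' (hc₁ i)) (comp_nonneg' (hc₂ j))
  refine ⟨n₁ + n₂, Fin.append q₁ q₂, Fin.append μ₁ μ₂, ?_, ?_, ?_, ?_, ?_⟩
  · intro i
    refine Fin.addCases (fun i => ?_) (fun i => ?_) i
    · rw [Fin.append_left]; exact hc₁ i
    · rw [Fin.append_right]; exact hc₂ i
  · have hl : ∀ (i : Fin n₁) (j' : Fin (n₁ + n₂)), Fin.castAdd n₂ i ≠ j' →
        Fin.append q₁ q₂ (Fin.castAdd n₂ i) ⊓ Fin.append q₁ q₂ j' = 0 := by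
      intro i j'
      refine Fin.addCases (fun j => ?_) (fun j => ?_) j' <;> intro hne
      · rw [Fin.append_left, Fin.append_left]
        exact hd₁ i j (fun h => hne (by rw [h]))
      · rw [Fin.append_left, Fin.append_right]
        exact hcross i j
    have hr : ∀ (i : Fin n₂) (j' : Fin (n₁ + n₂)), Fin.natAdd n₁ i ≠ j' →
        Fin.append q₁ q₂ (Fin.natAdd n₁ i) ⊓ Fin.append q₁ q₂ j' = 0 := by
      intro i j'
      refine Fin.addCases (fun j => ?_) (fun j => ?_) j' <;> intro hne
      · rw [Fin.append_right, Fin.append_left, inf_comm]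
        exact hcross j i
      · rw [Fin.append_right, Fin.append_right]
        exact hd₂ i j (fun h => hne (by rw [h]))
    intro i' j'
    exact Fin.addCases (fun i => hl i j') (fun i => hr i j') i'
  · rw [Fin.sum_univ_add]
    simp only [Fin.append_left, Fin.append_right]
    rw [hs₁, hs₂]
  · intro i
    refine Fin.addCases (fun i => ?_) (fun i => ?_) i
    · rw [Fin.append_left]; exact hm₁ i
    · rw [Fin.append_right]; exact hm₂ i
  · rw [Fin.sum_univ_add]
    simp only [Fin.append_left, Fin.append_right]

end BaSupAux

/-- Let `E` be a Riesz space with weak order unit `e` and `F` a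
Dedekind complete Riesz space.  For every increasing net `(μ_α)` in `ba(C_e,F)` and
`μ ∈ ba(C_e,F)` one has `μ_α ↑ μ` in `ba(C_e,F)` if and only if `μ_α(p) ↑ μ(p)` in `F`
for every component `p` of `e`.  In particular `ba(C_e,F)` is Dedekind complete. -/
theorem ba_sup_pointwise_and_dedekind_complete
    {E : Type u} [Lattice E] [AddCommGroup E] [Module ℝ E]
    [CovariantClass E E (· + ·) (· ≤ ·)] [PosSMulMono ℝ E]
    {F : Type v} [ConditionallyCompleteLattice F] [AddCommGroup F] [Module ℝ F]
    [CovariantClass F F (· + ·) (· ≤ ·)] [PosSMulMono ℝ F]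
    (e : E) (he : IsWeakUnit e) :
    (∀ (ι : Type w) [Preorder ι] [Nonempty ι], IsDirected ι (· ≤ ·) →
      ∀ m : ι → (E → F), (∀ a, m a ∈ baSet (F := F) e) →
        (∀ a b : ι, a ≤ b → baLe e (m a) (m b)) →
        ∀ μ ∈ baSet (F := F) e,
          (IsLUBba e (Set.range m) μ ↔
            ∀ p ∈ Comp e, IsLUB (Set.range fun a => m a p) (μ p))) ∧
    (∀ S : Set (E → F), S ⊆ baSet (F := F) e → S.Nonempty →
      (∃ ξ ∈ baSet (F := F) e, ∀ μ ∈ S, baLe e μ ξ) →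
      ∃ η, IsLUBba e S η) := by
  have he0 : (0 : E) ≤ e := le_of_lt he.1
  constructor
  · intro ι _ _ hdir m hm hmono μ hμ
    haveI := hdir
    constructor
    · intro hlub p hp
      have hbddr : ∀ r, r ∈ Comp e → BddAbove (Set.range fun a => m a r) := by
        intro r hr
        exact ⟨μ r, by rintro _ ⟨a, rfl⟩; exact hlub.2.1 (m a) ⟨a, rfl⟩ r hr⟩
      constructor
      · rintro _ ⟨a, rfl⟩
        exact hlub.2.1 (m a) ⟨a, rfl⟩ p hp
      · intro c hc
        have key : μ p ≤ sSup (Set.range fun a => m a p) := by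
          refine hlub.2.2 (fun r => sSup (Set.range fun a => m a r))
            ⟨⟨?_, ?_⟩, ?_⟩ ?_ p hp
          · show sSup (Set.range fun a => m a 0) = 0
            have h0 : (fun a : ι => m a 0) = fun _ => (0 : F) :=
              funext fun a => (hm a).1.1
            rw [h0, Set.range_const, csSup_singleton]
          · intro p' q' hp' hq' hd'
            show sSup (Set.range fun a => m a (p' + q')) = _ + _
            have harg : (fun a => m a (p' + q')) = fun a => m a p' + m a q' :=
              funext fun a => (hm a).1.2 p' q' hp' hq' hd'
            rw [harg]
            exact csSup_range_add hdir (fun a => m a p') (fun a => m a q')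
              (fun a b hab => hmono a b hab p' hp')
              (fun a b hab => hmono a b hab q' hq')
              (μ p') (fun a => hlub.2.1 (m a) ⟨a, rfl⟩ p' hp')
              (μ q') (fun a => hlub.2.1 (m a) ⟨a, rfl⟩ q' hq')
          · obtain ⟨a₀⟩ := (inferInstance : Nonempty ι)
            obtain ⟨g₀, hg₀, hb₀⟩ := (hm a₀).2
            obtain ⟨gμ, hgμ, hbμ⟩ := hμ.2
            refine ⟨g₀ + gμ, add_nonneg hg₀ hgμ, ?_⟩
            intro r hr
            have hlo : m a₀ r ≤ sSup (Set.range fun a => m a r) :=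
              le_csSup (hbddr r hr) ⟨a₀, rfl⟩
            have hhi : sSup (Set.range fun a => m a r) ≤ μ r :=
              csSup_le (Set.range_nonempty _)
                (by rintro _ ⟨a, rfl⟩; exact hlub.2.1 (m a) ⟨a, rfl⟩ r hr)
            exact abs_le_of_between hlo hhi (hb₀ r hr) (hbμ r hr) hg₀ hgμ
          · rintro _ ⟨a, rfl⟩ r hr
            exact le_csSup (hbddr r hr) ⟨a, rfl⟩
        exact le_trans key (csSup_le (Set.range_nonempty _) (fun b hb => hc hb))
    · intro hpt
      refine ⟨hμ, ?_, ?_⟩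
      · rintro _ ⟨a, rfl⟩ p hp
        exact (hpt p hp).1 ⟨a, rfl⟩
      · intro ξ hξ hub p hp
        exact (hpt p hp).2 (by rintro _ ⟨a, rfl⟩; exact hub (m a) ⟨a, rfl⟩ p hp)
  · intro S hS hne hbdd
    obtain ⟨μ₀, hμ₀⟩ := hne
    obtain ⟨ξ, hξ, hξub⟩ := hbdd
    have hSc : ∀ μ' ∈ S, IsChargeOn e μ' := fun μ' h => (hS h).1
    have hVne : ∀ p, p ∈ Comp e → (valSet e S p).Nonempty :=
      fun p hp => ⟨μ₀ p, self_mem_valSet hμ₀ hp⟩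
    have hVbdd : ∀ p, BddAbove (valSet e S p) :=
      fun p => ⟨ξ p, fun v hv => valSet_le he0 hξ.1 hξub hv⟩
    refine ⟨fun p => sSup (valSet e S p), ⟨⟨?_, ?_⟩, ?_⟩, ?_, ?_⟩
    · show sSup (valSet e S 0) = 0
      rw [valSet_zero he0 hSc, csSup_singleton]
    · intro p q hp hq hd
      show sSup (valSet e S (p + q)) = sSup (valSet e S p) + sSup (valSet e S q)
      apply le_antisymm
      · apply csSup_le (hVne _ (comp_add' hp hq hd))
        intro v hv
        obtain ⟨v₁, hv₁, v₂, hv₂, rfl⟩ := valSet_split he0 hSc hp hq hd hv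
        exact add_le_add (le_csSup (hVbdd p) hv₁) (le_csSup (hVbdd q) hv₂)
      · apply add_csSup_le (hVne p hp) (hVne q hq)
        intro v₁ h₁ v₂ h₂
        exact le_csSup (hVbdd (p + q)) (valSet_add hp hq hd h₁ h₂)
    · obtain ⟨g₀, hg₀, hb₀⟩ := (hS hμ₀).2
      obtain ⟨gξ, hgξ, hbξ⟩ := hξ.2
      refine ⟨g₀ + gξ, add_nonneg hg₀ hgξ, ?_⟩
      intro p hp
      have hlo : μ₀ p ≤ sSup (valSet e S p) :=
        le_csSup (hVbdd p) (self_mem_valSet hμ₀ hp)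
      have hhi : sSup (valSet e S p) ≤ ξ p :=
        csSup_le (hVne p hp) (fun v hv => valSet_le he0 hξ.1 hξub hv)
      exact abs_le_of_between hlo hhi (hb₀ p hp) (hbξ p hp) hg₀ hgξ
    · intro μ' hμ' p hp
      exact le_csSup (hVbdd p) (self_mem_valSet hμ' hp)
    · intro ξ' hξ' hub p hp
      exact csSup_le (hVne p hp) (fun v hv => valSet_le he0 hξ'.1 hub hv)

end RieszPaper

end
end
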